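/- Let n ≥ 1, let A and G be positive definite Hermitian n×n complex matrices, and let X be a Hermitian n×n complex matrix. Then Re tr(A⁻¹·G·A⁻¹·X·A⁻¹·X) ≥ 0 and (Re tr(A⁻¹·G·A⁻¹·X))² ≤ 2 · Re tr(A⁻¹·G) · Re tr(A⁻¹·G·A⁻¹·X·A⁻¹·X). -/

import Mathlib

open Matrix
open scoped ComplexOrder

/-- Nonpositivity of the second derivative of `Φ(A) = -log(Re tr(A⁻¹G))` along
Hermitian directions `X` (the content of the Hessian computation (3.10)). -/
theorem stmt_8 (n : ℕ) (hn : 1 ≤ n) (A G X : Matrix (Fin n) (Fin n) ℂ)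
    (hA : A.PosDef) (hG : G.PosDef) (hX : X.IsHermitian) :
    0 ≤ (A⁻¹ * G * A⁻¹ * X * A⁻¹ * X).trace.re ∧
      ((A⁻¹ * G * A⁻¹ * X).trace.re) ^ 2 ≤
        2 * (A⁻¹ * G).trace.re * (A⁻¹ * G * A⁻¹ * X * A⁻¹ * X).trace.re := by
  have hB : (A⁻¹).PosDef := hA.inv
  obtain ⟨S, hSh, hS2⟩ : ∃ S : Matrix (Fin n) (Fin n) ℂ, Sᴴ = S ∧ S * S = A⁻¹ :=
    open scoped MatrixOrder in
    ⟨CFC.sqrt A⁻¹, (CFC.sqrt_nonneg A⁻¹).posSemidef.isHermitian,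
      CFC.sqrt_mul_sqrt_self A⁻¹ hB.posSemidef.nonneg⟩
  obtain ⟨T, hTh, hT2⟩ : ∃ T : Matrix (Fin n) (Fin n) ℂ, Tᴴ = T ∧ T * T = G :=
    open scoped MatrixOrder in
    ⟨CFC.sqrt G, (CFC.sqrt_nonneg G).posSemidef.isHermitian,
      CFC.sqrt_mul_sqrt_self G hG.posSemidef.nonneg⟩
  have hXe : Xᴴ = X := hX
  set N := T * S with hN
  set M := T * S * S * X * S with hM
  -- re of trace of Wᴴ * W is nonneg
  have trge : ∀ W : Matrix (Fin n) (Fin n) ℂ, 0 ≤ ((Wᴴ * W).trace).re := by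
    intro W
    have h : ((Wᴴ * W).trace) = ∑ i, ∑ j, (starRingEnd ℂ) (W j i) * W j i := by
      simp [Matrix.trace, Matrix.diag, Matrix.mul_apply, Matrix.conjTranspose_apply]
    rw [h, Complex.re_sum]
    refine Finset.sum_nonneg fun i _ => ?_
    rw [Complex.re_sum]
    refine Finset.sum_nonneg fun j _ => ?_
    have : (starRingEnd ℂ) (W j i) * W j i = (Complex.normSq (W j i) : ℂ) := by
      rw [mul_comm, Complex.mul_conj]
    rw [this]
    simp [Complex.normSq_nonneg]
  set a := ((Nᴴ * N).trace).re with ha'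
  set b := ((Nᴴ * M).trace).re with hb'
  set c := ((Mᴴ * M).trace).re with hc'
  have ha : 0 ≤ a := trge N
  have hc : 0 ≤ c := trge M
  -- trace identities
  have e1 : (A⁻¹ * G).trace = (Nᴴ * N).trace := by
    have h1 : Nᴴ * N = (S * (T * T)) * S := by
      simp [hN, Matrix.conjTranspose_mul, hSh, hTh, mul_assoc]
    rw [h1, Matrix.trace_mul_comm (S * (T * T)) S, ← hS2, ← hT2]
    simp [mul_assoc]
  have e2 : (A⁻¹ * G * A⁻¹ * X).trace = (Nᴴ * M).trace := by
    have h2 : Nᴴ * M = (S * T * T * S * S * X) * S := by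
      simp [hN, hM, Matrix.conjTranspose_mul, hSh, hTh, mul_assoc]
    rw [h2, Matrix.trace_mul_comm (S * T * T * S * S * X) S, ← hS2, ← hT2]
    simp [mul_assoc]
  have e3 : (A⁻¹ * G * A⁻¹ * X * A⁻¹ * X).trace = (Mᴴ * M).trace := by
    have h3 : Mᴴ * M = (S * X) * (S * S * T * T * S * S * X * S) := by
      simp [hM, Matrix.conjTranspose_mul, hSh, hTh, hXe, mul_assoc]
    rw [h3, Matrix.trace_mul_comm (S * X) (S * S * T * T * S * S * X * S), ← hS2, ← hT2]
    simp [mul_assoc]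
  -- relate trace of Mᴴ N to b
  have hbn : ((Mᴴ * N).trace).re = b := by
    have : Mᴴ * N = (Nᴴ * M)ᴴ := by simp [Matrix.conjTranspose_mul, mul_assoc]
    rw [this, Matrix.trace_conjTranspose]
    simp [hb']
  -- the quadratic is nonnegative
  have hquad : ∀ t : ℝ, 0 ≤ a * (t * t) + (2 * b) * t + c := by
    intro t
    have h0 := trge ((t : ℂ) • N + M)
    have expand : ((((t : ℂ) • N + M)ᴴ) * ((t : ℂ) • N + M)).trace =
        (t : ℂ) * (t : ℂ) * (Nᴴ * N).trace + (t : ℂ) * ((Nᴴ * M).trace + (Mᴴ * N).trace)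
          + (Mᴴ * M).trace := by
      simp only [Matrix.conjTranspose_add, Matrix.conjTranspose_smul, Complex.star_def,
        Complex.conj_ofReal, add_mul, mul_add, Matrix.trace_add, Matrix.smul_mul,
        Matrix.mul_smul, Matrix.trace_smul, smul_smul, smul_eq_mul]
      ring
    rw [expand] at h0
    have h0' : 0 ≤ t * t * a + t * (b + b) + c := by
      simpa [Complex.add_re, Complex.mul_re, Complex.ofReal_re, Complex.ofReal_im,
        ← ha', ← hb', ← hc', hbn] using h0
    linarith
  have hd : discrim a (2 * b) c ≤ 0 := discrim_le_zero hquad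
  rw [discrim] at hd
  constructor
  · rw [e3]; exact hc
  · rw [e1, e2, e3]
    nlinarith [ha, hc, sq_nonneg b, mul_nonneg ha hc]
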